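/- Let n ≥ 3, let G be an n-ary group with multiplication μₙ, fix e ∈ G with querelement ē, and let g ∗ h := μₙ[g, e^{n−3}, ē, h] be the associated binary group with identity e. Let q ≥ 1 be an integer with ℓ_φ(q) := (q(n−2)+1)/(n−1) a positive integer, let φ_q(g) be the ℓ_φ(q)-fold iterated μₙ-product of (e, g, followed by q copies of the polyadic inverse e⁻¹), and let b_q be the iterated μₙ-product of [[n]]_q = (qⁿ−1)/(q−1) copies of e. Then b_q is a quasi-fixed point of φ_q: φ_q(b_q) = b_q ∗ φ_q(e). -/

import Mathlib

/-- Total associativity of an `n`-ary operation `μ` given on lists: the composed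
product of `2n-1` elements with one inner multiplication does not depend on the
position of the inner multiplication. -/
def TotAssoc {G : Type*} (n : ℕ) (μ : List G → G) : Prop :=
  ∀ p₁ c₁ s₁ p₂ c₂ s₂ : List G,
    c₁.length = n → c₂.length = n →
    p₁.length + s₁.length = n - 1 → p₂.length + s₂.length = n - 1 →
    p₁ ++ c₁ ++ s₁ = p₂ ++ c₂ ++ s₂ →
    μ (p₁ ++ μ c₁ :: s₁) = μ (p₂ ++ μ c₂ :: s₂)

/-- Unique solvability of an `n`-ary operation in each place `i = 0,…,n-1`. -/
def UniqSolv {G : Type*} (n : ℕ) (μ : List G → G) : Prop :=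
  ∀ (u : List G) (g : G), u.length = n - 1 →
    ∀ i ≤ n - 1, ∃! h : G, μ (u.take i ++ h :: u.drop i) = g

/-- The `ℓ`-fold iterated (left-nested) `n`-ary product of a list of
`ℓ(n-1)+1` elements; for `ℓ = 0` it returns the single element of the list. -/
def iterMu {G : Type*} (μ : List G → G) (n : ℕ) : ℕ → List G → G
  | 0, [] => μ []
  | 0, a :: _ => a
  | ℓ + 1, l => iterMu μ n ℓ (μ (l.take n) :: l.drop n)

/-- The Heine (`q`-deformed) number `[[k]]_q = (q^k - 1)/(q - 1)`, with `[[k]]₁ = k`. -/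
def heine (q k : ℕ) : ℕ := if q = 1 then k else (q ^ k - 1) / (q - 1)

lemma iterMu_succ {G : Type*} (μ : List G → G) (n ℓ : ℕ) (l : List G) :
    iterMu μ n (ℓ+1) l = iterMu μ n ℓ (μ (l.take n) :: l.drop n) := rfl

lemma iterA {G : Type*} {n : ℕ} (hn : 2 ≤ n) {μ : List G → G} (hassoc : TotAssoc n μ) :
    ∀ (ℓ : ℕ) (p c s : List G), c.length = n → p.length + s.length = ℓ * (n-1) →
      iterMu μ n (ℓ+1) (p ++ c ++ s) = iterMu μ n ℓ (p ++ μ c :: s) := by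
  intro ℓ
  induction ℓ with
  | zero =>
    intro p c s hc hps
    have hp : p = [] := List.eq_nil_of_length_eq_zero (by omega)
    have hs : s = [] := List.eq_nil_of_length_eq_zero (by omega)
    subst hp hs
    simp only [List.nil_append, List.append_nil, iterMu_succ]
    rw [List.take_of_length_le (le_of_eq hc), List.drop_of_length_le (le_of_eq hc)]
  | succ ℓ ih =>
    intro p c s hc hps
    have hmul : (ℓ+1) * (n-1) = ℓ * (n-1) + (n-1) := by ring
    by_cases h : n ≤ p.length
    · rw [iterMu_succ, iterMu_succ (l := p ++ μ c :: s)]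
      have h1 : (p ++ c ++ s).take n = p.take n := by
        rw [List.take_append_of_le_length (by rw [List.length_append]; omega),
            List.take_append_of_le_length h]
      have h2 : (p ++ c ++ s).drop n = p.drop n ++ c ++ s := by
        rw [List.drop_append_of_le_length (by rw [List.length_append]; omega),
            List.drop_append_of_le_length h]
      have h3 : (p ++ μ c :: s).take n = p.take n := List.take_append_of_le_length h
      have h4 : (p ++ μ c :: s).drop n = p.drop n ++ μ c :: s :=
        List.drop_append_of_le_length h
      rw [h1, h2, h3, h4]
      have e1 : μ (p.take n) :: (p.drop n ++ c ++ s)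
          = (μ (p.take n) :: p.drop n) ++ c ++ s := by simp
      have e2 : μ (p.take n) :: (p.drop n ++ μ c :: s)
          = (μ (p.take n) :: p.drop n) ++ μ c :: s := by simp
      rw [e1, e2]
      apply ih _ _ _ hc
      simp only [List.length_cons, List.length_drop]
      omega
    · push_neg at h
      obtain ⟨j, hj⟩ : ∃ j, n - p.length = j + 1 := ⟨n - p.length - 1, by omega⟩
      have hjs : j ≤ s.length := by omega
      -- RHS computation
      rw [iterMu_succ (l := p ++ μ c :: s)]
      have hrt : (p ++ μ c :: s).take n = p ++ μ c :: s.take j := by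
        rw [List.take_append, List.take_of_length_le h.le, hj,
          List.take_succ_cons]
      have hrd : (p ++ μ c :: s).drop n = s.drop j := by
        rw [List.drop_append, List.drop_of_length_le h.le,
          List.nil_append, hj, List.drop_succ_cons]
      rw [hrt, hrd]
      -- LHS computation
      rw [iterMu_succ (l := p ++ c ++ s)]
      have hlt : (p ++ c ++ s).take n = p ++ c.take (n - p.length) := by
        rw [List.append_assoc, List.take_append,
          List.take_of_length_le h.le, List.take_append_of_le_length (by omega)]
      have hld : (p ++ c ++ s).drop n = c.drop (n - p.length) ++ s := by
        rw [List.append_assoc, List.drop_append,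
          List.drop_of_length_le h.le, List.nil_append,
          List.drop_append_of_le_length (by omega)]
      rw [hlt, hld]
      have e1 : μ (p ++ c.take (n - p.length)) :: (c.drop (n - p.length) ++ s)
          = (μ (p ++ c.take (n - p.length)) :: (c.drop (n - p.length) ++ s.take j))
              ++ s.drop j := by
        simp [List.append_assoc]
      rw [e1]
      have e2 : (μ (p ++ c.take (n - p.length)) :: (c.drop (n - p.length) ++ s.take j))
            ++ s.drop j
          = [] ++ (μ (p ++ c.take (n - p.length)) :: (c.drop (n - p.length) ++ s.take j))
            ++ s.drop j := rfl
      rw [e2, ih _ _ _ (by simp; omega) (by simp; omega)]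
      simp only [List.nil_append]
      congr 1
      have := hassoc [] (p ++ c.take (n - p.length)) (c.drop (n - p.length) ++ s.take j)
        p c (s.take j) (by simp; omega) hc (by simp; omega) (by simp; omega)
        (by simp only [List.nil_append, List.append_assoc]
            rw [← List.append_assoc (List.take (n - p.length) c), List.take_append_drop])
      simpa using this


lemma iterB {G : Type*} {n : ℕ} (hn : 2 ≤ n) {μ : List G → G} (hassoc : TotAssoc n μ) :
    ∀ (k ℓ : ℕ) (p c s : List G), c.length = k * (n-1) + 1 →
      p.length + s.length = ℓ * (n-1) →
      iterMu μ n (ℓ + k) (p ++ c ++ s) = iterMu μ n ℓ (p ++ iterMu μ n k c :: s) := by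
  intro k
  induction k with
  | zero =>
    intro ℓ p c s hc hps
    have hc1 : c.length = 1 := by omega
    obtain ⟨x, rfl⟩ := List.length_eq_one_iff.mp hc1
    simp only [Nat.add_zero]
    congr 1
    simp [iterMu]
  | succ k ih =>
    intro ℓ p c s hc hps
    have hm1 : (k+1) * (n-1) = k * (n-1) + (n-1) := by ring
    have hm2 : (ℓ+k) * (n-1) = ℓ * (n-1) + k * (n-1) := by ring
    have hsplit : p ++ c ++ s = p ++ c.take n ++ (c.drop n ++ s) := by
      rw [List.append_assoc, List.append_assoc, ← List.append_assoc (c.take n),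
        List.take_append_drop]
    rw [show ℓ + (k+1) = (ℓ+k)+1 from rfl, hsplit,
      iterA hn hassoc (ℓ+k) p (c.take n) (c.drop n ++ s)
        (by simp; omega) (by simp; omega)]
    have e : p ++ μ (c.take n) :: (c.drop n ++ s)
        = p ++ (μ (c.take n) :: c.drop n) ++ s := by simp
    rw [e, ih ℓ p _ s (by simp; omega) hps, iterMu_succ]

lemma keyCancel {G : Type*} {m : ℕ} {μ : List G → G} (hassoc : TotAssoc (m+3) μ)
    (hsolv : UniqSolv (m+3) μ) {e ebar : G}
    (hebar : μ (List.replicate (m+2) e ++ [ebar]) = e) :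
    μ (List.replicate (m+1) e ++ [ebar, e]) = e := by
  have hflat : List.replicate (m+2) e ++ (List.replicate (m+1) e ++ [ebar, e]) ++ []
      = List.replicate (m+1) e ++ (List.replicate (m+2) e ++ [ebar]) ++ [e] := by
    have h1 : List.replicate (m+2) e ++ (List.replicate (m+1) e ++ [ebar, e]) ++ []
        = List.replicate (m+2+(m+1)) e ++ [ebar, e] := by
      simp only [List.replicate_add, List.append_assoc, List.append_nil]
    have h2 : List.replicate (m+1) e ++ (List.replicate (m+2) e ++ [ebar]) ++ [e]
        = List.replicate (m+1+(m+2)) e ++ [ebar, e] := by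
      simp only [List.replicate_add, List.append_assoc, List.cons_append,
        List.singleton_append, List.nil_append]
    rw [h1, h2, show m+2+(m+1) = m+1+(m+2) by omega]
  have h := hassoc (List.replicate (m+2) e) (List.replicate (m+1) e ++ [ebar, e]) []
      (List.replicate (m+1) e) (List.replicate (m+2) e ++ [ebar]) [e]
      (by simp) (by simp) (by simp) (by simp) hflat
  rw [hebar] at h
  have h2 : List.replicate (m+1) e ++ e :: [e] = List.replicate (m+2) e ++ [e] := by
    simp only [show m+2 = (m+1)+1 from rfl, List.replicate_succ', List.append_assoc,
      List.singleton_append, List.cons_append, List.nil_append]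
  rw [h2] at h
  have hu := hsolv (List.replicate (m+2) e) (μ (List.replicate (m+2) e ++ [e]))
    (by simp) (m+2) (by omega)
  rw [List.take_of_length_le (by simp), List.drop_of_length_le (by simp)] at hu
  obtain ⟨w, hw, huniq⟩ := hu
  have ha := huniq (μ (List.replicate (m+1) e ++ [ebar, e])) (by simpa using h)
  have hb := huniq e rfl
  rw [ha, hb]

/-- In the setting of the q-deformed Hosszú–Gluskin
construction, the distinguished element `b_q` (the iterated μ-product of
`[[n]]_q` copies of `e`) is a quasi-fixed point of `φ_q`:
`φ_q(b_q) = b_q ∗ φ_q(e)`. -/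
theorem statement9 {G : Type*} (n q : ℕ) (hn : 3 ≤ n) (hq : 1 ≤ q)
    (μ : List G → G) (hassoc : TotAssoc n μ) (hsolv : UniqSolv n μ)
    (e ebar : G) (hebar : μ (List.replicate (n - 1) e ++ [ebar]) = e)
    (st : G → G → G)
    (hst : ∀ g h : G, st g h = μ (g :: (List.replicate (n - 3) e ++ [ebar, h])))
    (lphi : ℕ) (hlphi : lphi * (n - 1) = q * (n - 2) + 1)
    (φq : G → G)
    (hφq : ∀ g : G, φq g = iterMu μ n lphi
      (e :: g :: (List.replicate q (List.replicate (n - 3) e ++ [ebar])).flatten))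
    (le : ℕ) (hle : le * (n - 1) + 1 = heine q n)
    (bq : G) (hbq : bq = iterMu μ n le (List.replicate (heine q n) e)) :
    φq bq = st bq (φq e) := by
  obtain ⟨m, rfl⟩ : ∃ m, n = m + 3 := ⟨n - 3, by omega⟩
  have hn2 : 2 ≤ m + 3 := by omega
  simp only [show m+3-1 = m+2 from rfl, show m+3-2 = m+1 from rfl,
    show m+3-3 = m from rfl] at hebar hst hlphi hφq hle
  rw [← hle] at hbq
  set k := le * (m+2) with hk
  set J := (List.replicate q (List.replicate m e ++ [ebar])).flatten with hJ
  have hJlen : J.length = q * (m+1) := by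
    rw [hJ]
    simp [List.length_flatten, List.map_replicate, List.sum_replicate, smul_eq_mul]
  have hswap : ∀ (i : ℕ) (l : List G),
      List.replicate i e ++ e :: l = e :: (List.replicate i e ++ l) := by
    intro i l
    rw [show (List.replicate i e ++ e :: l) = (List.replicate i e ++ [e]) ++ l by simp,
      ← List.replicate_succ', List.replicate_succ, List.cons_append]
  have hmul1 : (lphi + le) * (m+2) = lphi * (m+2) + le * (m+2) := by ring
  -- LHS
  have hL : φq bq = iterMu μ (m+3) (lphi + le) ([e] ++ List.replicate (k+1) e ++ J) := by
    rw [iterB hn2 hassoc le lphi [e] (List.replicate (k+1) e) J (by simp [hk])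
      (by simp [hJlen]; omega)]
    rw [hφq, hbq]
    rfl
  -- μ of a list of length n as iterMu 1
  have hμ1 : ∀ l : List G, l.length = m+3 → μ l = iterMu μ (m+3) 1 l := by
    intro l hl
    rw [iterMu_succ, List.take_of_length_le hl.le, List.drop_of_length_le hl.le]
    rfl
  -- RHS
  have hR : st bq (φq e) = iterMu μ (m+3) (1 + lphi + le)
      ([] ++ List.replicate (k+1) e ++ (List.replicate m e ++ ebar :: e :: e :: J)) := by
    rw [hst, hμ1 _ (by simp)]
    have e1 : bq :: (List.replicate m e ++ [ebar, φq e])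
        = (bq :: (List.replicate m e ++ [ebar])) ++ [φq e] := by simp
    rw [e1, hφq e,
      ← iterB hn2 hassoc lphi 1 (bq :: (List.replicate m e ++ [ebar])) (e :: e :: J) []
        (by simp [hJlen]; omega) (by simp), hbq]
    have e2 : ((iterMu μ (m+3) le (List.replicate (k+1) e)) ::
          (List.replicate m e ++ [ebar])) ++ (e :: e :: J) ++ []
        = [] ++ (iterMu μ (m+3) le (List.replicate (k+1) e)) ::
            (List.replicate m e ++ ebar :: e :: e :: J) := by simp
    rw [e2, ← iterB hn2 hassoc le (1+lphi) [] (List.replicate (k+1) e)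
      (List.replicate m e ++ ebar :: e :: e :: J) (by simp [hk])
      (by simp only [show m+3-1 = m+2 from rfl, List.length_append, List.length_nil,
            List.length_replicate, List.length_cons, hJlen]
          have h9 : (1+lphi)*(m+2) = (m+2) + lphi*(m+2) := by ring
          rw [h9, hlphi]; omega)]
  -- cancellation of the neutral polyad on the RHS
  have hC : μ (List.replicate (m+1) e ++ [ebar, e]) = e :=
    keyCancel hassoc hsolv hebar
  have e3 : ([] : List G) ++ List.replicate (k+1) e ++
        (List.replicate m e ++ ebar :: e :: e :: J)
      = List.replicate k e ++ (List.replicate (m+1) e ++ [ebar, e]) ++ (e :: J) := by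
    simp only [List.nil_append, List.replicate_succ, List.append_assoc, List.cons_append,
      List.singleton_append, hswap]
  rw [hL, hR, e3, show 1 + lphi + le = (lphi + le) + 1 by omega,
    iterA hn2 hassoc (lphi + le) _ _ _ (by simp)
      (by simp only [show m+3-1 = m+2 from rfl, List.length_replicate, List.length_nil,
            List.length_append, List.length_cons, hJlen]
          rw [hmul1, hlphi]; omega), hC]
  congr 1
  simp only [List.replicate_succ, List.cons_append, List.append_assoc, hswap,
    List.singleton_append, List.nil_append]
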